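/- Let s ≥ 3 be a fixed integer and n = sm. For 1 ≤ i ≤ s-1 let F_i = {X ⊆ [n] : |X| = m - i and |X ∩ [s-1]| ≥ i}. Then (|F_1| + |F_2| + ⋯ + |F_{s-1}|) / C(sm, m-1) tends to β_s as m → ∞, where β_s = ((s-1)/(s-2))·(1 - (1 - (s-2)/(s²-s))^{s-1}). -/

import Mathlib

open Finset

open Filter


lemma count_inter {α : Type*} [Fintype α] [DecidableEq α] (A : Finset α) (k j : ℕ) (hj : j ≤ k) :
    (univ.filter fun X : Finset α => X.card = k ∧ (X ∩ A).card = j).card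
      = A.card.choose j * (Fintype.card α - A.card).choose (k - j) := by
  rw [← card_compl A, ← Finset.card_powersetCard, ← Finset.card_powersetCard,
    ← Finset.card_product]
  apply Finset.card_nbij' (fun X => (X ∩ A, X \ A)) (fun P => P.1 ∪ P.2)
  · intro X hX
    simp only [mem_coe, mem_filter, mem_univ, true_and] at hX
    simp only [mem_coe, Finset.mem_product, Finset.mem_powersetCard]
    have h1 := Finset.card_inter_add_card_sdiff X A
    refine ⟨⟨inter_subset_right, hX.2⟩, ?_, by omega⟩
    intro x hx
    simp only [Finset.mem_sdiff] at hx
    simp [hx.2]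
  · intro P hP
    simp only [mem_coe, Finset.mem_product, Finset.mem_powersetCard] at hP
    obtain ⟨⟨hP1, hc1⟩, hP2, hc2⟩ := hP
    have hdisj : Disjoint P.1 P.2 := by
      refine Finset.disjoint_left.2 fun x hx1 hx2 => ?_
      have := hP2 hx2; simp only [Finset.mem_compl] at this; exact this (hP1 hx1)
    simp only [mem_coe, mem_filter, mem_univ, true_and]
    constructor
    · rw [Finset.card_union_of_disjoint hdisj, hc1, hc2]; omega
    · have : (P.1 ∪ P.2) ∩ A = P.1 := by
        ext x
        simp only [mem_inter, mem_union]
        constructor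
        · rintro ⟨hx | hx, hxA⟩
          · exact hx
          · exact absurd hxA (by simpa using hP2 hx)
        · intro hx; exact ⟨Or.inl hx, hP1 hx⟩
      rw [this, hc1]
  · intro X hX
    ext x; simp only [mem_union, mem_inter, Finset.mem_sdiff]; tauto
  · intro P hP
    simp only [mem_coe, Finset.mem_product, Finset.mem_powersetCard] at hP
    obtain ⟨⟨hP1, hc1⟩, hP2, hc2⟩ := hP
    have e1 : (P.1 ∪ P.2) ∩ A = P.1 := by
      ext x
      simp only [mem_inter, mem_union]
      constructor
      · rintro ⟨hx | hx, hxA⟩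
        · exact hx
        · exact absurd hxA (by simpa using hP2 hx)
      · intro hx; exact ⟨Or.inl hx, hP1 hx⟩
    have e2 : (P.1 ∪ P.2) \ A = P.2 := by
      ext x
      simp only [Finset.mem_sdiff, mem_union]
      constructor
      · rintro ⟨hx | hx, hxA⟩
        · exact absurd (hP1 hx) hxA
        · exact hx
      · intro hx; exact ⟨Or.inr hx, by simpa using hP2 hx⟩
    beta_reduce
    rw [e1, e2]

lemma cardF {α : Type*} [Fintype α] [DecidableEq α] (A : Finset α) (k i : ℕ) (hk : A.card ≤ k) :
    (univ.filter fun X : Finset α => X.card = k ∧ i ≤ (X ∩ A).card).card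
      = ∑ j ∈ Icc i A.card, A.card.choose j * (Fintype.card α - A.card).choose (k - j) := by
  rw [Finset.card_eq_sum_card_fiberwise
    (f := fun X : Finset α => (X ∩ A).card) (t := Icc i A.card) ?_]
  · refine Finset.sum_congr rfl fun j hj => ?_
    simp only [Finset.mem_Icc] at hj
    rw [Finset.filter_filter, ← count_inter A k j (le_trans hj.2 hk)]
    congr 1
    apply Finset.filter_congr
    intro X _
    constructor
    · rintro ⟨⟨h1, _⟩, h3⟩; exact ⟨h1, h3⟩
    · rintro ⟨h1, h2⟩; exact ⟨⟨h1, h2 ▸ hj.1⟩, h2⟩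
  · intro X hX
    simp only [mem_coe, mem_filter, mem_univ, true_and] at hX
    simp only [mem_coe, Finset.mem_Icc]
    exact ⟨hX.2, Finset.card_le_card Finset.inter_subset_right⟩

lemma dF_lim (g : ℕ → ℕ) (c : ℝ) (h : Tendsto (fun m : ℕ => (g m : ℝ) / m) atTop (nhds c))
    (h2 : Tendsto g atTop atTop) (r : ℕ) :
    Tendsto (fun m : ℕ => ((g m).descFactorial r : ℝ) / (m : ℝ) ^ r) atTop (nhds (c ^ r)) := by
  induction r with
  | zero => simpa using tendsto_const_nhds
  | succ r ih =>
      have hev : ∀ᶠ m : ℕ in atTop, ((g m).descFactorial (r+1) : ℝ) / (m : ℝ) ^ (r+1)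
          = (((g m : ℝ) - r) / m) * (((g m).descFactorial r : ℝ) / (m : ℝ) ^ r) := by
        filter_upwards [h2.eventually_ge_atTop r, eventually_ge_atTop 1] with m hm hm1
        have hm0 : (m : ℝ) ≠ 0 := by positivity
        rw [Nat.descFactorial_succ]
        push_cast [Nat.cast_sub hm]
        rw [pow_succ]
        field_simp
      rw [show c ^ (r+1) = c * c ^ r from by ring]
      refine Tendsto.congr' (EventuallyEq.symm hev) (Tendsto.mul ?_ ih)
      have : Tendsto (fun m : ℕ => (g m : ℝ) / m - r * ((m:ℝ))⁻¹) atTop (nhds (c - r * 0)) :=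
        h.sub ((tendsto_const_nhds).mul tendsto_natCast_atTop_atTop.inv_tendsto_atTop)
      simp only [mul_zero, sub_zero] at this
      refine this.congr fun m => ?_
      rw [sub_div]
      ring

lemma cast_dF {n k : ℕ} (h : k ≤ n) : ((n.descFactorial k : ℕ) : ℝ) = (Nat.factorial n) / ((Nat.factorial (n - k) : ℕ) : ℝ) := by
  rw [eq_div_iff (by positivity)]
  rw [← Nat.cast_mul, mul_comm, Nat.factorial_mul_descFactorial h]

lemma ratio_eq (s a t : ℕ) (hs : 3 ≤ s) (m : ℕ) (hm : a + t + 2 ≤ m) :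
    ((s*m - a).choose (m - 1 - t) : ℝ) / ((s*m).choose (m-1) : ℝ) =
      (((m-1).descFactorial t : ℝ) * (((s-1)*m+1+t).descFactorial a : ℝ)) /
      ((((s-1)*m+1+t).descFactorial t : ℝ) * (((s*m).descFactorial a : ℝ))) := by
  have hb : (s-1)*m + m = s*m := by
    cases' Nat.exists_eq_add_of_le hs with u hu
    subst hu; rw [show 3 + u - 1 = 2 + u from by omega]; ring
  have h2m : 2*m ≤ (s-1)*m := Nat.mul_le_mul_right m (by omega)
  rw [← hb]
  set b := (s-1)*m with hbdef
  clear_value b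
  -- now all linear in b m a t
  have hc1 : m - 1 - t ≤ b + m - a := by omega
  have hc2 : m - 1 ≤ b + m := by omega
  have e1 : b + m - a - (m - 1 - t) = b + 1 + t - a := by omega
  have e2 : b + m - (m - 1) = b + 1 := by omega
  rw [Nat.cast_choose ℝ hc1, Nat.cast_choose ℝ hc2, e1, e2,
    cast_dF (show t ≤ m - 1 by omega), cast_dF (show a ≤ b + 1 + t by omega),
    cast_dF (show t ≤ b + 1 + t by omega), cast_dF (show a ≤ b + m by omega)]
  have e4 : b + 1 + t - t = b + 1 := by omega
  rw [e4]
  have f1 : ((Nat.factorial (m - 1 - t) : ℕ) : ℝ) ≠ 0 := by positivity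
  have f2 : ((Nat.factorial (b + 1 + t - a) : ℕ) : ℝ) ≠ 0 := by positivity
  have f3 : ((Nat.factorial (m - 1) : ℕ) : ℝ) ≠ 0 := by positivity
  have f4 : ((Nat.factorial (b + 1) : ℕ) : ℝ) ≠ 0 := by positivity
  have f5 : ((Nat.factorial (b + m) : ℕ) : ℝ) ≠ 0 := by positivity
  have f6 : ((Nat.factorial (b + m - a) : ℕ) : ℝ) ≠ 0 := by positivity
  have f7 : ((Nat.factorial (b + 1 + t) : ℕ) : ℝ) ≠ 0 := by positivity
  field_simp

lemma inv_nat_lim : Tendsto (fun m : ℕ => ((m : ℝ))⁻¹) atTop (nhds 0) :=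
  tendsto_natCast_atTop_atTop.inv_tendsto_atTop

lemma lin_div_lim (c d : ℕ) : Tendsto (fun m : ℕ => ((c*m+d : ℕ) : ℝ) / m) atTop (nhds c) := by
  have h : Tendsto (fun m : ℕ => (c : ℝ) + d * ((m:ℝ))⁻¹) atTop (nhds ((c:ℝ) + d * 0)) :=
    tendsto_const_nhds.add (tendsto_const_nhds.mul inv_nat_lim)
  simp only [mul_zero, add_zero] at h
  refine h.congr' ?_
  filter_upwards [eventually_ge_atTop 1] with m hm
  have : (m : ℝ) ≠ 0 := by positivity
  push_cast
  field_simp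

lemma lin_atTop (c d : ℕ) (hc : 1 ≤ c) : Tendsto (fun m : ℕ => c*m+d) atTop atTop := by
  apply tendsto_atTop_atTop.2
  intro b
  exact ⟨b, fun m hm => by nlinarith⟩

lemma sub_one_div_lim : Tendsto (fun m : ℕ => ((m - 1 : ℕ) : ℝ) / m) atTop (nhds 1) := by
  have h : Tendsto (fun m : ℕ => (1 : ℝ) - ((m:ℝ))⁻¹) atTop (nhds (1 - 0)) :=
    tendsto_const_nhds.sub inv_nat_lim
  simp only [sub_zero] at h
  refine h.congr' ?_
  filter_upwards [eventually_ge_atTop 1] with m hm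
  have : (m : ℝ) ≠ 0 := by positivity
  rw [Nat.cast_sub hm]
  push_cast
  field_simp

lemma sub_one_atTop : Tendsto (fun m : ℕ => m - 1) atTop atTop := by
  apply tendsto_atTop_atTop.2
  intro b
  exact ⟨b + 1, fun m hm => by omega⟩

lemma ratio_lim (s a t : ℕ) (hs : 3 ≤ s) :
    Tendsto (fun m : ℕ => ((s*m - a).choose (m-1-t) : ℝ) / ((s*m).choose (m-1) : ℝ)) atTop
      (nhds ((((s:ℝ)-1)/s)^a * (1/((s:ℝ)-1))^t)) := by
  have hs1 : ((s - 1 : ℕ) : ℝ) = (s : ℝ) - 1 := by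
    rw [Nat.cast_sub (by omega)]; norm_num
  have hX := dF_lim (fun m => m - 1) 1 sub_one_div_lim sub_one_atTop t
  have hY := dF_lim (fun m => (s-1)*m+1+t) ((s:ℝ)-1)
    (by simpa [hs1, add_assoc] using lin_div_lim (s-1) (1+t))
    (by simpa [add_assoc] using lin_atTop (s-1) (1+t) (by omega)) a
  have hZ := dF_lim (fun m => (s-1)*m+1+t) ((s:ℝ)-1)
    (by simpa [hs1, add_assoc] using lin_div_lim (s-1) (1+t))
    (by simpa [add_assoc] using lin_atTop (s-1) (1+t) (by omega)) t
  have hW := dF_lim (fun m => s*m) (s:ℝ)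
    (by simpa using lin_div_lim s 0) (by simpa using lin_atTop s 0 (by omega)) a
  have hs0 : (s : ℝ) ≠ 0 := by positivity
  have hs1' : (s : ℝ) - 1 ≠ 0 := by
    have : (3:ℝ) ≤ s := by exact_mod_cast hs
    nlinarith
  have hden : (((s:ℝ)-1)^t * (s:ℝ)^a) ≠ 0 := by positivity
  have main : Tendsto (fun m : ℕ =>
      (((m-1).descFactorial t : ℝ) * (((s-1)*m+1+t).descFactorial a : ℝ)) /
      ((((s-1)*m+1+t).descFactorial t : ℝ) * (((s*m).descFactorial a : ℝ)))) atTop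
      (nhds ((1^t * ((s:ℝ)-1)^a) / (((s:ℝ)-1)^t * (s:ℝ)^a))) := by
    have h2 := Tendsto.div (hX.mul hY) (hZ.mul hW) hden
    refine h2.congr' ?_
    filter_upwards [eventually_ge_atTop (s + a + t + 2)] with m hm
    have hm0 : (m : ℝ) ≠ 0 := Nat.cast_ne_zero.2 (by omega)
    have hZpos : ((s-1)*m+1+t).descFactorial t ≠ 0 := by
      rw [Ne, Nat.descFactorial_eq_zero_iff_lt]; omega
    have hWpos : (s*m).descFactorial a ≠ 0 := by
      rw [Ne, Nat.descFactorial_eq_zero_iff_lt]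
      intro hlt
      have : s * m ≥ 1 * m := Nat.mul_le_mul_right m (by omega)
      omega
    have hZ0 : ((((s-1)*m+1+t).descFactorial t : ℕ) : ℝ) ≠ 0 := Nat.cast_ne_zero.2 hZpos
    have hW0 : (((s*m).descFactorial a : ℕ) : ℝ) ≠ 0 := Nat.cast_ne_zero.2 hWpos
    have hp : ((m:ℝ))^t ≠ 0 := by positivity
    have hq : ((m:ℝ))^a ≠ 0 := by positivity
    simp only [Pi.div_apply, Pi.mul_apply]
    field_simp
  have heq : ((1:ℝ)^t * ((s:ℝ)-1)^a) / (((s:ℝ)-1)^t * (s:ℝ)^a)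
      = (((s:ℝ)-1)/s)^a * (1/((s:ℝ)-1))^t := by
    rw [div_pow, one_div, inv_pow, one_pow]
    field_simp
  rw [← heq]
  refine Tendsto.congr' ?_ main
  filter_upwards [eventually_ge_atTop (a+t+2)] with m hm
  exact (ratio_eq s a t hs m hm).symm

lemma fin_filter_card (n c : ℕ) (hc : c ≤ n) :
    (univ.filter fun y : Fin n => (y : ℕ) < c).card = c := by
  have h : (univ.filter fun y : Fin n => (y : ℕ) < c).card = (range c).card := by
    refine Finset.card_nbij (i := fun y => (y : ℕ)) ?_ ?_ ?_
    · intro y hy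
      simp only [mem_coe, mem_filter, mem_univ, true_and] at hy
      simpa using hy
    · intro y1 hy1 y2 hy2 hy
      exact Fin.val_injective hy
    · intro k hk
      simp only [Finset.coe_range, Set.mem_Iio] at hk
      refine ⟨⟨k, lt_of_lt_of_le hk hc⟩, ?_, rfl⟩
      simp [hk]
  rw [h, Finset.card_range]

lemma binom1 (a : ℕ) (x : ℝ) :
    ∑ j ∈ Icc 1 a, (a.choose j : ℝ) * x ^ j = (1 + x) ^ a - 1 := by
  have h := add_pow x 1 a
  simp only [one_pow, mul_one] at h
  rw [Finset.sum_range_succ'] at h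
  simp only [pow_zero, Nat.choose_zero_right, Nat.cast_one, one_mul] at h
  have h2 : ∑ j ∈ Icc 1 a, (a.choose j : ℝ) * x ^ j
      = ∑ i ∈ range a, x ^ (i+1) * (a.choose (i+1) : ℝ) := by
    rw [← Finset.Ico_add_one_right_eq_Icc, Finset.sum_Ico_eq_sum_range]
    simp only [Nat.add_sub_cancel]
    exact Finset.sum_congr rfl fun i _ => by rw [add_comm 1 i]; ring
  rw [h2]
  rw [add_comm 1 x]
  rw [h]
  ring

lemma value_id (s : ℕ) (hs : 3 ≤ s) :
    ∑ i ∈ Icc 1 (s-1), ∑ j ∈ Icc i (s-1), ((s-1).choose j : ℝ) *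
        ((((s:ℝ)-1)/s)^(s-1) * (1/((s:ℝ)-1))^(i+j-1))
      = ((s:ℝ)-1)/((s:ℝ)-2) * (1 - (1 - ((s:ℝ)-2)/((s:ℝ)^2-(s:ℝ)))^(s-1)) := by
  have hsR : (3:ℝ) ≤ (s:ℝ) := by exact_mod_cast hs
  have h1 : (s:ℝ) - 1 ≠ 0 := by nlinarith
  have h2 : (s:ℝ) - 2 ≠ 0 := by nlinarith
  have h0 : (s:ℝ) ≠ 0 := by nlinarith
  set a := s - 1 with ha
  set q : ℝ := 1/((s:ℝ)-1) with hqdef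
  set K : ℝ := (((s:ℝ)-1)/s)^a with hK
  -- swap sums
  have hswap : ∑ i ∈ Icc 1 a, ∑ j ∈ Icc i a, ((a.choose j : ℝ) * (K * q^(i+j-1)))
      = ∑ j ∈ Icc 1 a, ∑ i ∈ Icc 1 j, ((a.choose j : ℝ) * (K * q^(i+j-1))) := by
    apply Finset.sum_comm'
    intro i j
    simp only [Finset.mem_Icc]
    omega
  rw [hswap]
  -- inner sum
  have hinner : ∀ j ∈ Icc 1 a, ∑ i ∈ Icc 1 j, ((a.choose j : ℝ) * (K * q^(i+j-1)))
      = (a.choose j : ℝ) * K * (q^j * ((q^j - 1)/(q - 1))) := by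
    intro j hj
    simp only [Finset.mem_Icc] at hj
    have hq1 : q ≠ 1 := by
      rw [hqdef]
      intro hcon
      rw [div_eq_one_iff_eq h1] at hcon
      nlinarith
    rw [← Finset.mul_sum]
    have : ∑ i ∈ Icc 1 j, (K * q^(i+j-1)) = K * q^j * ∑ i ∈ range j, q^i := by
      rw [Finset.mul_sum, ← Finset.Ico_add_one_right_eq_Icc, Finset.sum_Ico_eq_sum_range]
      simp only [Nat.add_sub_cancel]
      refine Finset.sum_congr rfl fun i _ => ?_
      rw [show 1 + i + j - 1 = j + i by omega, pow_add]
      ring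
    rw [this, geom_sum_eq hq1]
    ring
  rw [Finset.sum_congr rfl hinner]
  have hq1' : q - 1 ≠ 0 := by
    rw [hqdef]
    intro hcon
    have h3 : (1:ℝ)/((s:ℝ)-1) = 1 := by linarith
    rw [div_eq_one_iff_eq h1] at h3
    nlinarith
  -- expand: ∑ C(a,j) K (q^{2j} - q^j)/(q-1)
  have hexp : ∑ j ∈ Icc 1 a, (a.choose j : ℝ) * K * (q^j * ((q^j - 1)/(q - 1)))
      = (K/(q-1)) * ((∑ j ∈ Icc 1 a, (a.choose j : ℝ) * (q^2)^j)
          - ∑ j ∈ Icc 1 a, (a.choose j : ℝ) * q^j) := by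
    rw [← Finset.sum_sub_distrib, Finset.mul_sum]
    refine Finset.sum_congr rfl fun j _ => ?_
    rw [← pow_mul, show 2*j = j + j from by ring, pow_add]
    field_simp
  rw [hexp, binom1, binom1]
  -- key base identities
  have key1 : K * (1 + q)^a = 1 := by
    rw [hK, ← mul_pow]
    have : ((s:ℝ)-1)/s * (1 + q) = 1 := by
      rw [hqdef]; field_simp; ring
    rw [this, one_pow]
  have key2 : K * (1 + q^2)^a = (1 - ((s:ℝ)-2)/((s:ℝ)^2-(s:ℝ)))^a := by
    rw [hK, ← mul_pow]
    congr 1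
    rw [hqdef]
    have hss : (s:ℝ)^2 - (s:ℝ) ≠ 0 := by nlinarith
    field_simp
    ring
  -- final algebra
  have expand : K/(q-1) * (((1 + q^2)^a - 1) - ((1 + q)^a - 1))
      = (K * (1+q^2)^a - K * (1+q)^a)/(q-1) := by ring
  rw [expand, key1, key2]
  have hY : (1:ℝ)/((s:ℝ)-1) - 1 ≠ 0 := by rw [← hqdef]; exact hq1'
  rw [hqdef, div_eq_iff hY]
  field_simp
  ring

/-- for fixed `s ≥ 3` and `n = sm`, with
`F_i = {X ⊆ [n] : |X| = m - i and |X ∩ [s-1]| ≥ i}` for `1 ≤ i ≤ s-1`,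
the ratio `(|F_1| + ⋯ + |F_{s-1}|) / C(sm, m-1)` tends to
`β_s = ((s-1)/(s-2))·(1 - (1 - (s-2)/(s²-s))^{s-1})` as `m → ∞`. -/
theorem stmt5 (s : ℕ) (hs : 3 ≤ s) :
    Filter.Tendsto
      (fun m : ℕ =>
        (∑ i ∈ Finset.Icc 1 (s - 1),
            ((univ.filter fun X : Finset (Fin (s * m)) =>
                X.card = m - i ∧
                  i ≤ (X ∩ univ.filter fun y : Fin (s * m) => (y : ℕ) < s - 1).card).card : ℝ)) /
          ((s * m).choose (m - 1) : ℝ))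
      Filter.atTop
      (nhds (((s : ℝ) - 1) / ((s : ℝ) - 2) *
        (1 - (1 - ((s : ℝ) - 2) / ((s : ℝ) ^ 2 - s)) ^ (s - 1)))) := by
  have main : Tendsto (fun m : ℕ =>
      ∑ i ∈ Icc 1 (s-1), ∑ j ∈ Icc i (s-1), ((s-1).choose j : ℝ) *
        (((s*m - (s-1)).choose (m-1-(i+j-1)) : ℝ) / ((s*m).choose (m-1) : ℝ))) atTop
      (nhds (∑ i ∈ Icc 1 (s-1), ∑ j ∈ Icc i (s-1), ((s-1).choose j : ℝ) *
        ((((s:ℝ)-1)/s)^(s-1) * (1/((s:ℝ)-1))^(i+j-1)))) := by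
    apply tendsto_finset_sum
    intro i _
    apply tendsto_finset_sum
    intro j _
    exact (ratio_lim s (s-1) (i+j-1) hs).const_mul _
  rw [value_id s hs] at main
  have hval : ((s:ℝ)-1)/((s:ℝ)-2) * (1 - (1 - ((s:ℝ)-2)/((s:ℝ)^2-(s:ℝ)))^(s-1))
      = ((s : ℝ) - 1) / ((s : ℝ) - 2) *
        (1 - (1 - ((s : ℝ) - 2) / ((s : ℝ) ^ 2 - s)) ^ (s - 1)) := rfl
  rw [hval] at main
  refine Tendsto.congr' ?_ main
  filter_upwards [eventually_ge_atTop (3*s)] with m hm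
  have hA : (univ.filter fun y : Fin (s*m) => (y : ℕ) < s - 1).card = s - 1 :=
    fin_filter_card (s*m) (s-1) (by have h9 : s ≤ s*m := Nat.le_mul_of_pos_right s (by omega); omega)
  have key : ∀ i ∈ Icc 1 (s-1),
      ((univ.filter fun X : Finset (Fin (s * m)) =>
          X.card = m - i ∧
            i ≤ (X ∩ univ.filter fun y : Fin (s * m) => (y : ℕ) < s - 1).card).card : ℝ)
        = ∑ j ∈ Icc i (s-1), ((s-1).choose j : ℝ) *
            ((s*m - (s-1)).choose (m-1-(i+j-1)) : ℝ) := by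
    intro i hi
    simp only [Finset.mem_Icc] at hi
    have hk : (univ.filter fun y : Fin (s*m) => (y : ℕ) < s - 1).card ≤ m - i := by
      rw [hA]; omega
    rw [cardF _ (m - i) i hk, hA]
    rw [Fintype.card_fin]
    push_cast
    refine Finset.sum_congr rfl fun j hj => ?_
    simp only [Finset.mem_Icc] at hj
    rw [show m - i - j = m - 1 - (i + j - 1) from by omega]
  rw [Finset.sum_congr rfl key, Finset.sum_div]
  exact Finset.sum_congr rfl fun i _ => by
    rw [Finset.sum_div]
    exact Finset.sum_congr rfl fun j _ => (mul_div_assoc _ _ _).symm
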